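/- Let A be a finite nonempty alphabet and let Z be a set of positions over A. If Player 1 has a winning strategy for Z, then there exists a subset Z' ⊆ Z such that Player 1 has a winning strategy for Z' and ∑'_{p ∈ Z'} (1/|A|)^{⌊len(p)/2⌋} = 1. -/

import Mathlib

open scoped ENNReal

variable {A : Type*}

/-- A position `p` is a prefix of the play `x`. -/
def PrefixOfPlay (p : List A) (x : ℕ → A) : Prop :=
  List.ofFn (fun i : Fin p.length => x i) = p

/-- The play `x` is consistent with the Player 1 strategy `s₁`. -/
def Consistent1 (s₁ : List A → A) (x : ℕ → A) : Prop :=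
  ∀ n : ℕ, x (2 * n) = s₁ (List.ofFn (fun i : Fin (2 * n) => x i))

/-- The play `x` is consistent with the Player 2 strategy `s₂`. -/
def Consistent2 (s₂ : List A → A) (x : ℕ → A) : Prop :=
  ∀ n : ℕ, x (2 * n + 1) = s₂ (List.ofFn (fun i : Fin (2 * n + 1) => x i))

/-- Player 1 has a winning strategy for the open set determined by `Z`. -/
def P1Wins (Z : Set (List A)) : Prop :=
  ∃ s₁ : List A → A, ∀ x : ℕ → A, Consistent1 s₁ x → ∃ p ∈ Z, PrefixOfPlay p x

/-- Player 2 has a winning strategy for the open set determined by `Z`. -/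
def P2Wins (Z : Set (List A)) : Prop :=
  ∃ s₂ : List A → A, ∀ x : ℕ → A, Consistent2 s₂ x → ¬ ∃ p ∈ Z, PrefixOfPlay p x

/-! ### Auxiliary game-theoretic lemmas -/

theorem prefixOfPlay_iff (p : List A) (x : ℕ → A) :
    PrefixOfPlay p x ↔ ∀ i : ℕ, (h : i < p.length) → x i = p[i] := by
  unfold PrefixOfPlay
  constructor
  · intro hp i h
    have h' : i < (List.ofFn fun i : Fin p.length => x i).length := by simpa using h
    have := List.getElem_of_eq hp h'
    simpa using this
  · intro h
    apply List.ext_getElem (by simp)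
    intro i h1 h2
    simp [h i h2]

/-- Consistency of a position with the Player 1 strategy `s₁`. -/
def ConsPos (s₁ : List A → A) (p : List A) : Prop :=
  ∀ i : ℕ, (h : 2 * i < p.length) → p[2 * i] = s₁ (p.take (2 * i))

theorem take_eq_ofFn (p : List A) (m : ℕ) (hm : m ≤ p.length) (x : ℕ → A)
    (hx : ∀ i : ℕ, i < m → (h : i < p.length) → x i = p[i]) :
    (List.ofFn fun j : Fin m => x j) = p.take m := by
  apply List.ext_getElem (by simp [hm])
  intro i h1 h2
  have hi : i < m := by simpa using h1
  simp only [List.getElem_ofFn, List.getElem_take]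
  exact hx i hi (by omega)

/-- The play determined by the Player 1 strategy `s₁` and the sequence `y` of moves
of Player 2. -/
def play (s₁ : List A → A) (y : ℕ → A) : ℕ → A
  | m =>
    if m % 2 = 1 then y (m / 2)
    else s₁ (List.ofFn fun i : Fin m => play s₁ y i)
  termination_by m => m
  decreasing_by exact i.isLt

theorem play_odd (s₁ : List A → A) (y : ℕ → A) (i : ℕ) :
    play s₁ y (2 * i + 1) = y i := by
  rw [play]
  have h1 : (2 * i + 1) % 2 = 1 := by omega
  have h2 : (2 * i + 1) / 2 = i := by omega
  rw [if_pos h1, h2]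

theorem play_even (s₁ : List A → A) (y : ℕ → A) (i : ℕ) :
    play s₁ y (2 * i) = s₁ (List.ofFn fun j : Fin (2 * i) => play s₁ y j) := by
  rw [play]
  have h1 : ¬ (2 * i) % 2 = 1 := by omega
  rw [if_neg h1]

theorem consistent1_play (s₁ : List A → A) (y : ℕ → A) :
    Consistent1 s₁ (play s₁ y) := fun n => play_even s₁ y n

theorem prefix_play_iff (s₁ : List A → A) (p : List A) (hp : ConsPos s₁ p) (y : ℕ → A) :
    PrefixOfPlay p (play s₁ y) ↔
      ∀ i : ℕ, (h : 2 * i + 1 < p.length) → y i = p[2 * i + 1] := by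
  rw [prefixOfPlay_iff]
  constructor
  · intro H i h
    have := H (2 * i + 1) h
    rwa [play_odd] at this
  · intro H m
    induction m using Nat.strong_induction_on with
    | _ m IH =>
      intro h
      obtain ⟨i, rfl | rfl⟩ := Nat.even_or_odd' m
      · rw [play_even]
        have ht : (List.ofFn fun j : Fin (2 * i) => play s₁ y j) = p.take (2 * i) :=
          take_eq_ofFn p (2 * i) (le_of_lt h) _ (fun j hj hj2 => IH j hj hj2)
        rw [ht]
        exact (hp i h).symm
      · rw [play_odd]
        exact H i h

theorem consPos_of_prefix (s₁ : List A → A) (p : List A) (x : ℕ → A)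
    (hx : Consistent1 s₁ x) (hp : PrefixOfPlay p x) : ConsPos s₁ p := by
  rw [prefixOfPlay_iff] at hp
  intro i h
  rw [← hp (2 * i) h, hx i]
  congr 1
  exact take_eq_ofFn p (2 * i) (le_of_lt h) x (fun j hj hj2 => hp j hj2)

theorem isPrefix_of_prefixOfPlay (p q : List A) (x : ℕ → A)
    (hp : PrefixOfPlay p x) (hq : PrefixOfPlay q x) (hl : p.length ≤ q.length) :
    p <+: q := by
  rw [prefixOfPlay_iff] at hp hq
  have : p = q.take p.length := by
    apply List.ext_getElem (by simp [hl])
    intro i h1 h2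
    rw [List.getElem_take, ← hp i h1, hq i (by omega)]
  rw [this]
  exact List.take_prefix _ _

theorem prefixOfPlay_of_isPrefix (q p : List A) (hqp : q <+: p) (x : ℕ → A)
    (hp : PrefixOfPlay p x) : PrefixOfPlay q x := by
  rw [prefixOfPlay_iff] at *
  intro i h
  rw [hp i (lt_of_lt_of_le h hqp.length_le)]
  exact (hqp.getElem h).symm

theorem exists_minimal_prefix (Z : Set (List A)) (x : ℕ → A)
    (hx : ∃ p ∈ Z, PrefixOfPlay p x) :
    ∃ p ∈ Z, PrefixOfPlay p x ∧ ∀ q, q <+: p → q ∈ Z → q = p := by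
  classical
  obtain ⟨p0, hp0, hpre0⟩ := hx
  have hne : ∃ m : ℕ, ∃ p ∈ Z, p.length = m ∧ PrefixOfPlay p x :=
    ⟨p0.length, p0, hp0, rfl, hpre0⟩
  obtain ⟨p, hpZ, hplen, hppre⟩ := Nat.find_spec hne
  refine ⟨p, hpZ, hppre, ?_⟩
  intro q hq hqZ
  have hqpre : PrefixOfPlay q x := prefixOfPlay_of_isPrefix q p hq x hppre
  have hle : Nat.find hne ≤ q.length := Nat.find_min' hne ⟨q, hqZ, rfl, hqpre⟩
  exact hq.eq_of_length_le (by omega)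

/-! ### The Haar (coin-flipping) measure on `ℕ → ZMod n` -/

section Haar

open MeasureTheory TopologicalSpace

variable (n : ℕ) [NeZero n]

instance : TopologicalSpace (ZMod n) := ⊥

instance : DiscreteTopology (ZMod n) := ⟨rfl⟩

instance : IsTopologicalAddGroup (ZMod n) where
  continuous_add := continuous_of_discreteTopology
  continuous_neg := continuous_of_discreteTopology

noncomputable instance : MeasurableSpace (ℕ → ZMod n) := borel _

instance : BorelSpace (ℕ → ZMod n) := ⟨rfl⟩

/-- The normalized Haar measure on `ℕ → ZMod n`, i.e. the coin-flipping measure. -/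
noncomputable def cylMeasure : Measure (ℕ → ZMod n) :=
  Measure.addHaarMeasure (⊤ : PositiveCompacts (ℕ → ZMod n))

theorem cylMeasure_univ : cylMeasure n Set.univ = 1 := by
  have := Measure.addHaarMeasure_self (K₀ := (⊤ : PositiveCompacts (ℕ → ZMod n)))
  rwa [PositiveCompacts.coe_top] at this

/-- A cylinder set. -/
def Cyl (k : ℕ) (c : ℕ → ZMod n) : Set (ℕ → ZMod n) := {y | ∀ i < k, y i = c i}

theorem measurableSet_cyl (k : ℕ) (c : ℕ → ZMod n) : MeasurableSet (Cyl n k c) := by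
  have : Cyl n k c = ⋂ (i : ℕ) (_ : i < k), (fun y : ℕ → ZMod n => y i) ⁻¹' {c i} := by
    ext y; simp [Cyl]
  rw [this]
  exact MeasurableSet.iInter fun i => MeasurableSet.iInter fun _ =>
    (isClosed_singleton.preimage (continuous_apply i)).measurableSet

instance : (cylMeasure n).IsAddLeftInvariant :=
  Measure.isAddLeftInvariant_addHaarMeasure _

theorem cylMeasure_cyl_eq_zero_cyl (k : ℕ) (c : ℕ → ZMod n) :
    cylMeasure n (Cyl n k c) = cylMeasure n (Cyl n k 0) := by
  have hshift : Cyl n k c =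
      (fun y => (fun i => if i < k then - c i else 0) + y) ⁻¹' (Cyl n k 0) := by
    ext y
    simp only [Set.mem_preimage, Cyl, Set.mem_setOf_eq, Pi.add_apply, Pi.zero_apply]
    constructor
    · intro H i hi
      rw [if_pos hi, H i hi]
      simp
    · intro H i hi
      have := H i hi
      rw [if_pos hi] at this
      linear_combination (norm := abel) this
  rw [hshift]
  exact measure_preimage_add _ _ _

theorem cylMeasure_cyl (k : ℕ) (c : ℕ → ZMod n) :
    cylMeasure n (Cyl n k c) = ((n : ℝ≥0∞))⁻¹ ^ k := by
  classical
  -- the cylinders indexed by `Fin k → ZMod n` partition the space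
  let f : (Fin k → ZMod n) → ℕ → ZMod n := fun v i => if h : i < k then v ⟨i, h⟩ else 0
  have hdisj : Pairwise (Function.onFun Disjoint fun v : Fin k → ZMod n => Cyl n k (f v)) := by
    intro v w hvw
    rw [Function.onFun, Set.disjoint_left]
    intro y hyv hyw
    apply hvw
    funext i
    have h1 := hyv i.1 i.2
    have h2 := hyw i.1 i.2
    rw [h1] at h2
    simpa [f, i.2] using h2
  have hcover : (⋃ v : Fin k → ZMod n, Cyl n k (f v)) = Set.univ := by
    ext y
    simp only [Set.mem_iUnion, Set.mem_univ, iff_true]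
    refine ⟨fun i => y i.1, fun i hi => ?_⟩
    simp [f, hi]
  have hsum := measure_iUnion (μ := cylMeasure n) hdisj (fun v => measurableSet_cyl n k (f v))
  rw [hcover, cylMeasure_univ, tsum_fintype] at hsum
  have hconst : ∀ v : Fin k → ZMod n, cylMeasure n (Cyl n k (f v)) = cylMeasure n (Cyl n k 0) :=
    fun v => cylMeasure_cyl_eq_zero_cyl n k (f v)
  rw [Finset.sum_congr rfl (fun v _ => hconst v), Finset.sum_const, Finset.card_univ,
    Fintype.card_pi] at hsum
  simp only [Fintype.card_fin, Finset.prod_const, Finset.card_univ, ZMod.card,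
    Fintype.card_fin] at hsum
  -- hsum : 1 = (n ^ k) • cylMeasure n (Cyl n k 0)
  have hne : (n : ℝ≥0∞) ^ k ≠ 0 := by
    simp [NeZero.ne n]
  have hnt : (n : ℝ≥0∞) ^ k ≠ ⊤ := by
    exact ENNReal.pow_ne_top (ENNReal.natCast_ne_top n)
  have h0 : cylMeasure n (Cyl n k 0) = ((n : ℝ≥0∞) ^ k)⁻¹ := by
    have := congrArg (fun t => ((n : ℝ≥0∞) ^ k)⁻¹ * t) hsum
    simp only [nsmul_eq_mul, Nat.cast_pow, ← mul_assoc] at this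
    rw [ENNReal.inv_mul_cancel hne hnt, one_mul, mul_one] at this
    exact this.symm
  rw [cylMeasure_cyl_eq_zero_cyl, h0, ENNReal.inv_pow]

end Haar

/-! ### Main theorem -/


/-- If Player 1 has a winning strategy for `Z`, there is `Z' ⊆ Z` for which Player 1 has
a winning strategy and `∑'_{p ∈ Z'} (1/|A|)^⌊len(p)/2⌋ = 1`. -/
theorem player1_wins_imp_minimal_size_subset [Fintype A] [Nonempty A] (Z : Set (List A))
    (h : P1Wins Z) :
    ∃ Z' ⊆ Z, P1Wins Z' ∧
      ∑' p : Z', ((1 : ℝ≥0∞) / Fintype.card A) ^ (p.1.length / 2) = 1 := by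
  classical
  obtain ⟨s₁, hs₁⟩ := h
  set Z' : Set (List A) := {p | p ∈ Z ∧ ConsPos s₁ p ∧ ∀ q, q <+: p → q ∈ Z → q = p} with hZ'def
  have hsub : Z' ⊆ Z := fun p hp => hp.1
  have hwin : ∀ x : ℕ → A, Consistent1 s₁ x → ∃ p ∈ Z', PrefixOfPlay p x := by
    intro x hx
    obtain ⟨p, hpZ, hppre, hmin⟩ := exists_minimal_prefix Z x (hs₁ x hx)
    exact ⟨p, ⟨hpZ, consPos_of_prefix s₁ p x hx hppre, hmin⟩, hppre⟩
  refine ⟨Z', hsub, ⟨s₁, hwin⟩, ?_⟩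
  set n := Fintype.card A with hn
  haveI : NeZero n := ⟨Fintype.card_ne_zero⟩
  let e : ZMod n ≃ A := Fintype.equivOfCardEq (by simp [ZMod.card, hn])
  open MeasureTheory in
  let E : List A → Set (ℕ → ZMod n) := fun p =>
    {y | PrefixOfPlay p (play s₁ (fun i => e (y i)))}
  have hE : ∀ p ∈ Z', E p = Cyl n (p.length / 2)
      (fun i => if h : 2 * i + 1 < p.length then e.symm p[2 * i + 1] else 0) := by
    intro p hp
    ext y
    rw [Set.mem_setOf_eq, prefix_play_iff s₁ p hp.2.1]
    constructor
    · intro H i hi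
      have h2 : 2 * i + 1 < p.length := by omega
      simp only [dif_pos h2]
      exact (Equiv.eq_symm_apply e).2 (H i h2)
    · intro H i h2
      have hi : i < p.length / 2 := by omega
      have := H i hi
      simp only [dif_pos h2] at this
      rw [this]
      simp
  have hmeas : ∀ p : Z', MeasurableSet (E p.1) := by
    intro p
    rw [hE p.1 p.2]
    exact measurableSet_cyl n _ _
  have hdisj : Pairwise (Function.onFun Disjoint fun p : Z' => E p.1) := by
    intro p q hpq
    rw [Function.onFun, Set.disjoint_left]
    intro y hyp hyq
    apply hpq
    apply Subtype.ext
    rcases le_total p.1.length q.1.length with hl | hl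
    · have := isPrefix_of_prefixOfPlay p.1 q.1 _ hyp hyq hl
      exact q.2.2.2 p.1 this p.2.1
    · have := isPrefix_of_prefixOfPlay q.1 p.1 _ hyq hyp hl
      exact (p.2.2.2 q.1 this q.2.1).symm
  have hcover : (⋃ p : Z', E p.1) = Set.univ := by
    ext y
    simp only [Set.mem_iUnion, Set.mem_univ, iff_true]
    obtain ⟨p, hpZ', hpre⟩ :=
      hwin (play s₁ (fun i => e (y i))) (consistent1_play s₁ _)
    exact ⟨⟨p, hpZ'⟩, hpre⟩
  have hsum := measure_iUnion (μ := cylMeasure n) hdisj hmeas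
  rw [hcover, cylMeasure_univ] at hsum
  calc ∑' p : Z', ((1 : ℝ≥0∞) / n) ^ (p.1.length / 2)
      = ∑' p : Z', cylMeasure n (E p.1) := by
        refine tsum_congr fun p => ?_
        rw [hE p.1 p.2, cylMeasure_cyl, one_div]
    _ = 1 := hsum.symm
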